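/- Let μ be a probability measure on X and λ₁, λ₂ : X → ℝ be bounded measurable functions with λᵢ ≥ κ > 0. If λ₁ = g ∘ w and λ₂ = g ∘ v for bounded functions w, v and a Lipschitz function g : ℝ → [κ, ∞) with Lipschitz constant ḡ, then ∫ λ₁ log(λ₁/λ₂) dμ − ∫ (λ₁ − λ₂) dμ ≤ (ḡ²/κ) · ‖w − v‖_∞². -/

import Mathlib

open MeasureTheory Real

lemma kl_pt_ineq {a b : ℝ} (ha : 0 < a) (hb : 0 < b) :
    a * Real.log (a / b) - (a - b) ≤ (a - b) ^ 2 / b := by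
  have h := Real.log_le_sub_one_of_pos (div_pos ha hb)
  have h2 : a * Real.log (a / b) ≤ a * (a / b - 1) :=
    mul_le_mul_of_nonneg_left h ha.le
  have key : a * (a / b - 1) - (a - b) = (a - b) ^ 2 / b := by
    field_simp
  linarith

theorem kl_le_sup_norm_sq {X : Type*} [MeasurableSpace X] (μ : Measure X)
    [IsProbabilityMeasure μ] (κ gbar : ℝ) (hκ : 0 < κ)
    (g : ℝ → ℝ) (hg : ∀ a b : ℝ, |g a - g b| ≤ gbar * |a - b|)
    (hgκ : ∀ t : ℝ, κ ≤ g t)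
    (w v : X → ℝ)
    (hmw : Measurable fun x => g (w x)) (hmv : Measurable fun x => g (v x))
    (Cw : ℝ) (hw : ∀ x, |w x| ≤ Cw) (Cv : ℝ) (hv : ∀ x, |v x| ≤ Cv)
    (hint1 : Integrable (fun x => g (w x) * Real.log (g (w x) / g (v x))) μ)
    (hint2 : Integrable (fun x => g (w x) - g (v x)) μ) :
    ∫ x, g (w x) * Real.log (g (w x) / g (v x)) ∂μ - ∫ x, (g (w x) - g (v x)) ∂μ ≤
      (gbar ^ 2 / κ) * (⨆ x, |w x - v x|) ^ 2 := by
  have hne : Nonempty X := by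
    rcases isEmpty_or_nonempty X with h | h
    · have hu := measure_univ (μ := μ)
      rw [Set.univ_eq_empty_iff.mpr h, measure_empty] at hu
      exact absurd hu (by norm_num)
    · exact h
  set S := ⨆ x, |w x - v x| with hS
  have hgbar : 0 ≤ gbar := by
    have h01 := hg 0 1
    simp at h01
    nlinarith [abs_nonneg (g 0 - g 1)]
  have hbdd : BddAbove (Set.range fun x => |w x - v x|) := by
    refine ⟨Cw + Cv, ?_⟩
    rintro _ ⟨x, rfl⟩
    calc |w x - v x| ≤ |w x| + |v x| := abs_sub _ _
      _ ≤ Cw + Cv := add_le_add (hw x) (hv x)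
  have hleS : ∀ x, |w x - v x| ≤ S := fun x => le_ciSup hbdd x
  have hS0 : 0 ≤ S := le_trans (abs_nonneg _) (hleS hne.some)
  set C : ℝ := (gbar ^ 2 / κ) * S ^ 2 with hC
  have hpt : ∀ x, g (w x) * Real.log (g (w x) / g (v x)) - (g (w x) - g (v x)) ≤ C := by
    intro x
    have haw := lt_of_lt_of_le hκ (hgκ (w x))
    have hav := lt_of_lt_of_le hκ (hgκ (v x))
    have h1 := kl_pt_ineq haw hav
    have h2 : (g (w x) - g (v x)) ^ 2 / g (v x) ≤ (g (w x) - g (v x)) ^ 2 / κ := by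
      gcongr
      exact hgκ (v x)
    have h3 : (g (w x) - g (v x)) ^ 2 ≤ (gbar * S) ^ 2 := by
      rw [← sq_abs (g (w x) - g (v x))]
      have hle : |g (w x) - g (v x)| ≤ gbar * S :=
        le_trans (hg (w x) (v x)) (mul_le_mul_of_nonneg_left (hleS x) hgbar)
      exact pow_le_pow_left₀ (abs_nonneg _) hle 2
    have h4 : (g (w x) - g (v x)) ^ 2 / κ ≤ (gbar * S) ^ 2 / κ := by gcongr
    have h5 : (gbar * S) ^ 2 / κ = C := by rw [hC]; ring
    linarith
  have hmono := integral_mono (hint1.sub hint2) (integrable_const C) hpt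
  simp only [Pi.sub_apply] at hmono
  rw [integral_sub hint1 hint2, integral_const, probReal_univ] at hmono
  simpa using hmono
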